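/- Let (a,b,c) be an ABC-solution, n ≥ 2 an even integer, ε > 0, and (A,B,C) = Θ_n(a,b,c). Then log C ≥ [n(1+ε)/(n + nε − ε)]·(log rad(|A·B·C|) + (1+ε)^{−1}·f((a,b,c),ε) − log(2n)) − n·log 2. -/

import Mathlib

/-- An ABC-solution: distinct, pairwise coprime integers with a+b+c = 0, a < 0, b < 0. -/
def IsABCSolution (a b c : ℤ) : Prop :=
  a + b + c = 0 ∧ a < 0 ∧ b < 0 ∧
  a ≠ b ∧ b ≠ c ∧ a ≠ c ∧
  IsCoprime a b ∧ IsCoprime b c ∧ IsCoprime a c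

/-- The radical of a natural number: the product of its distinct prime factors. -/
def rad (n : ℕ) : ℕ := ∏ p ∈ n.primeFactors, p

/-- The quality function f((a,b,c),ε) = log c − (1+ε)·log rad(|a·b·c|). -/
noncomputable def fABC (a b c : ℤ) (ε : ℝ) : ℝ :=
  Real.log (c : ℝ) - (1 + ε) * Real.log (rad (a * b * c).natAbs : ℝ)

/-- The operation Θ_n on ABC-solutions, with m = n if c is even and m = 0 otherwise.
The divisions are exact integer divisions. -/
def theta (n : ℕ) (a b c : ℤ) : ℤ × ℤ × ℤ :=
  let m : ℕ := if 2 ∣ c then n else 0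
  (-((a - b) ^ n / 2 ^ m), -((c ^ n - (a - b) ^ n) / 2 ^ m), c ^ n / 2 ^ m)

lemma rad_pos (n : ℕ) : 0 < rad n :=
  Finset.prod_pos fun p hp => (Nat.prime_of_mem_primeFactors hp).pos

lemma rad_dvd_self (n : ℕ) : rad n ∣ n := Nat.prod_primeFactors_dvd n

lemma rad_le {n : ℕ} (hn : n ≠ 0) : rad n ≤ n :=
  Nat.le_of_dvd (Nat.pos_of_ne_zero hn) (rad_dvd_self n)

lemma rad_dvd_rad {m n : ℕ} (h : m ∣ n) (hn : n ≠ 0) : rad m ∣ rad n :=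
  Finset.prod_dvd_prod_of_subset _ _ _ (Nat.primeFactors_mono h hn)

lemma rad_mul_dvd (m n : ℕ) : rad (m * n) ∣ rad m * rad n := by
  rcases eq_or_ne m 0 with rfl | hm
  · simp [rad]
  rcases eq_or_ne n 0 with rfl | hn
  · simp [rad]
  rw [rad, rad, rad, Nat.primeFactors_mul hm hn]
  exact ⟨∏ p ∈ m.primeFactors ∩ n.primeFactors, p, Finset.prod_union_inter.symm⟩

lemma rad_pow (m : ℕ) {k : ℕ} (hk : k ≠ 0) : rad (m ^ k) = rad m := by
  rw [rad, rad, Nat.primeFactors_pow m hk]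

lemma rad_coprime_mul {m n : ℕ} (hm : m ≠ 0) (hn : n ≠ 0) (h : Nat.Coprime m n) :
    rad (m * n) = rad m * rad n := by
  rw [rad, rad, rad, Nat.primeFactors_mul hm hn,
    Finset.prod_union h.disjoint_primeFactors]

set_option maxHeartbeats 1000000 in
/-- lower bound for log C in terms of rad(|ABC|) and f((a,b,c),ε),
where (A,B,C) = Θ_n(a,b,c). -/
theorem log_C_ge (a b c : ℤ) (h : IsABCSolution a b c)
    (n : ℕ) (hn : 2 ≤ n) (hev : Even n) (ε : ℝ) (hε : 0 < ε) :
    Real.log ((theta n a b c).2.2 : ℝ) ≥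
      ((n : ℝ) * (1 + ε) / (n + n * ε - ε)) *
        (Real.log (rad ((theta n a b c).1 * (theta n a b c).2.1 *
            (theta n a b c).2.2).natAbs : ℝ) +
          (1 + ε)⁻¹ * fABC a b c ε - Real.log (2 * n)) -
      n * Real.log 2 := by
  obtain ⟨hsum, ha, hb, hab, hbc, hac, cab, cbc, cac⟩ := h
  obtain ⟨k, hk⟩ := hev
  obtain ⟨j, rfl⟩ : ∃ j, k = j + 1 := ⟨k - 1, by omega⟩
  subst hk
  set n : ℕ := (j + 1) + (j + 1) with hn_def
  have hc : (0:ℤ) < c := by linarith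
  have hceq : c = -a - b := by linarith
  have hane : a ≠ 0 := ha.ne
  have hbne : b ≠ 0 := hb.ne
  have hcne : c ≠ 0 := hc.ne'
  have hdne : a - b ≠ 0 := sub_ne_zero.mpr hab
  -- the exponent m and exact divisions
  set m : ℕ := if 2 ∣ c then n else 0 with hm_def
  have hmn : m ≤ n := by rw [hm_def]; split <;> omega
  have hdvd_c : (2:ℤ) ^ m ∣ c ^ n := by
    rw [hm_def]; split
    · exact pow_dvd_pow_of_dvd (by assumption) n
    · simp
  have hdvd_d : (2:ℤ) ^ m ∣ (a - b) ^ n := by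
    rw [hm_def]; split
    · rename_i h2c
      have h2d : (2:ℤ) ∣ a - b := by
        have : a - b = -c - 2 * b := by linarith
        rw [this]
        exact dvd_sub (dvd_neg.mpr h2c) ⟨b, rfl⟩
      exact pow_dvd_pow_of_dvd h2d n
    · simp
  have ht : theta n a b c =
      (-((a - b) ^ n / 2 ^ m), -((c ^ n - (a - b) ^ n) / 2 ^ m), c ^ n / 2 ^ m) := rfl
  set A := (theta n a b c).1 with hA_def
  set B := (theta n a b c).2.1 with hB_def
  set C := (theta n a b c).2.2 with hC_def
  have hA : A * 2 ^ m = -((a - b) ^ n) := by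
    rw [hA_def, ht]; show -((a - b) ^ n / 2 ^ m) * 2 ^ m = _
    rw [neg_mul, Int.ediv_mul_cancel hdvd_d]
  have hB : B * 2 ^ m = -(c ^ n - (a - b) ^ n) := by
    rw [hB_def, ht]; show -((c ^ n - (a - b) ^ n) / 2 ^ m) * 2 ^ m = _
    rw [neg_mul, Int.ediv_mul_cancel (dvd_sub hdvd_c hdvd_d)]
  have hC : C * 2 ^ m = c ^ n := by
    rw [hC_def, ht]; exact Int.ediv_mul_cancel hdvd_c
  -- the geometric sum S
  set S : ℤ := ∑ i ∈ Finset.range (j + 1), (c ^ 2) ^ i * ((a - b) ^ 2) ^ (j + 1 - 1 - i)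
    with hS_def
  have hgeom : S * (c ^ 2 - (a - b) ^ 2) = (c ^ 2) ^ (j + 1) - ((a - b) ^ 2) ^ (j + 1) :=
    geom_sum₂_mul _ _ _
  have hfactor : c ^ n - (a - b) ^ n = S * (4 * (a * b)) := by
    have h4 : c ^ 2 - (a - b) ^ 2 = 4 * (a * b) := by rw [hceq]; ring
    have e1 : (c ^ 2) ^ (j + 1) = c ^ n := by rw [← pow_mul]; congr 1; omega
    have e2 : ((a - b) ^ 2) ^ (j + 1) = (a - b) ^ n := by rw [← pow_mul]; congr 1; omega
    rw [← h4, hgeom, e1, e2]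
  have hSpos : 0 < S := by
    apply Finset.sum_pos
    · intro i _
      exact mul_pos (pow_pos (by positivity) i) (pow_pos (by positivity) _)
    · exact Finset.nonempty_range_add_one
  have habs_d : (a - b) ^ 2 ≤ c ^ 2 := by
    have h1 : a - b ≤ c := by linarith
    have h2 : -c ≤ a - b := by linarith
    exact sq_le_sq' h2 h1
  have hSle : S ≤ (j + 1) * (c ^ 2) ^ j := by
    rw [hS_def]
    calc ∑ i ∈ Finset.range (j + 1), (c ^ 2) ^ i * ((a - b) ^ 2) ^ (j + 1 - 1 - i)
        ≤ ∑ _i ∈ Finset.range (j + 1), (c ^ 2) ^ j := by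
          apply Finset.sum_le_sum
          intro i hi
          have hij : i ≤ j := by
            have := Finset.mem_range.mp hi; omega
          have e1 : ((a - b) ^ 2) ^ (j + 1 - 1 - i) ≤ (c ^ 2) ^ (j + 1 - 1 - i) :=
            pow_le_pow_left₀ (sq_nonneg _) habs_d _
          calc (c ^ 2) ^ i * ((a - b) ^ 2) ^ (j + 1 - 1 - i)
              ≤ (c ^ 2) ^ i * (c ^ 2) ^ (j + 1 - 1 - i) :=
                mul_le_mul_of_nonneg_left e1 (pow_nonneg (sq_nonneg c) i)
            _ = (c ^ 2) ^ j := by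
                rw [← pow_add]
                congr 1
                omega
      _ = (j + 1) * (c ^ 2) ^ j := by
          rw [Finset.sum_const, Finset.card_range, nsmul_eq_mul]
          push_cast; ring
  -- natAbs abbreviations
  set a' := a.natAbs
  set b' := b.natAbs
  set c' := c.natAbs
  set d' := (a - b).natAbs
  set s' := S.natAbs
  have ha' : a' ≠ 0 := Int.natAbs_ne_zero.mpr hane
  have hb' : b' ≠ 0 := Int.natAbs_ne_zero.mpr hbne
  have hc' : c' ≠ 0 := Int.natAbs_ne_zero.mpr hcne
  have hd' : d' ≠ 0 := Int.natAbs_ne_zero.mpr hdne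
  have hs' : s' ≠ 0 := Int.natAbs_ne_zero.mpr hSpos.ne'
  -- radical divisibility bounds
  have hAdvd : A ∣ (a - b) ^ n := ⟨-(2 ^ m), by linarith [hA]⟩
  have hCdvd : C ∣ c ^ n := ⟨2 ^ m, hC.symm⟩
  have hBdvd : B ∣ S * (4 * (a * b)) := ⟨-(2 ^ m), by rw [← hfactor]; linarith [hB]⟩
  have hradA : rad A.natAbs ≤ c' := by
    have h1 : rad A.natAbs ∣ rad (d' ^ n) := by
      apply rad_dvd_rad
      · rw [← Int.natAbs_pow]
        exact Int.natAbs_dvd_natAbs.mpr hAdvd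
      · exact pow_ne_zero n hd'
    rw [rad_pow d' (by omega : n ≠ 0)] at h1
    have h2 : rad d' ≤ d' := rad_le hd'
    have h3 : d' ≤ c' := by
      have e1 : (d' : ℤ) = |a - b| := Int.abs_eq_natAbs (a - b) |>.symm
      have e2 : (c' : ℤ) = c := Int.natAbs_of_nonneg hc.le
      have : (d' : ℤ) ≤ (c' : ℤ) := by
        rw [e1, e2]
        exact abs_le.mpr ⟨by linarith, by linarith⟩
      exact_mod_cast this
    exact le_trans (Nat.le_of_dvd (rad_pos d') h1) (le_trans h2 h3)
  have hradC : rad C.natAbs ∣ rad c' := by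
    have h1 : rad C.natAbs ∣ rad (c' ^ n) := by
      apply rad_dvd_rad
      · rw [← Int.natAbs_pow]
        exact Int.natAbs_dvd_natAbs.mpr hCdvd
      · exact pow_ne_zero n hc'
    rwa [rad_pow c' (by omega : n ≠ 0)] at h1
  have hradB : rad B.natAbs ≤ s' * (4 * (rad a' * rad b')) := by
    have habs : (S * (4 * (a * b))).natAbs = s' * (4 * (a' * b')) := by
      rw [Int.natAbs_mul, Int.natAbs_mul, Int.natAbs_mul]
      rfl
    have h1 : rad B.natAbs ∣ rad (s' * (4 * (a' * b'))) := by
      rw [← habs]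
      apply rad_dvd_rad (Int.natAbs_dvd_natAbs.mpr hBdvd)
      rw [habs]
      exact Nat.mul_ne_zero hs' (Nat.mul_ne_zero (by norm_num) (Nat.mul_ne_zero ha' hb'))
    have h2 : rad (s' * (4 * (a' * b'))) ∣ rad s' * (rad 4 * (rad a' * rad b')) := by
      calc rad (s' * (4 * (a' * b'))) ∣ rad s' * rad (4 * (a' * b')) := rad_mul_dvd _ _
        _ ∣ rad s' * (rad 4 * rad (a' * b')) :=
            mul_dvd_mul_left _ (rad_mul_dvd _ _)
        _ ∣ rad s' * (rad 4 * (rad a' * rad b')) :=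
            mul_dvd_mul_left _ (mul_dvd_mul_left _ (rad_mul_dvd _ _))
    have h3 : rad B.natAbs ≤ rad s' * (rad 4 * (rad a' * rad b')) :=
      Nat.le_of_dvd (Nat.mul_pos (rad_pos _) (Nat.mul_pos (rad_pos _) (Nat.mul_pos (rad_pos _) (rad_pos _)))) (h1.trans h2)
    refine h3.trans ?_
    exact Nat.mul_le_mul (rad_le hs')
      (Nat.mul_le_mul (rad_le (by norm_num)) le_rfl)
  -- rad of abc splits
  have cab' : Nat.Coprime a' b' := Int.isCoprime_iff_gcd_eq_one.mp cab
  have cac' : Nat.Coprime a' c' := Int.isCoprime_iff_gcd_eq_one.mp cac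
  have cbc' : Nat.Coprime b' c' := Int.isCoprime_iff_gcd_eq_one.mp cbc
  have hradabc : rad (a * b * c).natAbs = rad a' * rad b' * rad c' := by
    rw [Int.natAbs_mul, Int.natAbs_mul]
    rw [rad_coprime_mul (Nat.mul_ne_zero ha' hb') hc' (Nat.Coprime.mul cac' cbc')]
    rw [rad_coprime_mul ha' hb' cab']
  -- s' bound
  have hs'le : s' ≤ (j + 1) * (c' ^ 2) ^ j := by
    have e2 : (c' : ℤ) = c := Int.natAbs_of_nonneg hc.le
    have : (s' : ℤ) ≤ ((j + 1) * (c' ^ 2) ^ j : ℕ) := by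
      push_cast [e2]
      rw [Int.natAbs_of_nonneg hSpos.le]
      exact_mod_cast hSle
    exact_mod_cast this
  -- the key radical bound
  have key : rad (A * B * C).natAbs ≤ 2 * n * rad (a * b * c).natAbs * (c' * (c' ^ 2) ^ j) := by
    have h1 : rad (A * B * C).natAbs ≤ rad A.natAbs * rad B.natAbs * rad C.natAbs := by
      apply Nat.le_of_dvd (Nat.mul_pos (Nat.mul_pos (rad_pos _) (rad_pos _)) (rad_pos _))
      calc rad (A * B * C).natAbs = rad ((A * B).natAbs * C.natAbs) := by
            rw [Int.natAbs_mul]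
        _ ∣ rad (A * B).natAbs * rad C.natAbs := rad_mul_dvd _ _
        _ ∣ rad A.natAbs * rad B.natAbs * rad C.natAbs := by
            rw [Int.natAbs_mul]
            exact mul_dvd_mul_right (rad_mul_dvd _ _) _
    have h4 : rad C.natAbs ≤ rad c' := Nat.le_of_dvd (rad_pos _) hradC
    calc rad (A * B * C).natAbs
        ≤ rad A.natAbs * rad B.natAbs * rad C.natAbs := h1
      _ ≤ c' * (s' * (4 * (rad a' * rad b'))) * rad c' :=
          Nat.mul_le_mul (Nat.mul_le_mul hradA hradB) h4
      _ ≤ c' * (((j + 1) * (c' ^ 2) ^ j) * (4 * (rad a' * rad b'))) * rad c' := by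
          exact Nat.mul_le_mul (Nat.mul_le_mul le_rfl
            (Nat.mul_le_mul hs'le le_rfl)) le_rfl
      _ = 2 * n * rad (a * b * c).natAbs * (c' * (c' ^ 2) ^ j) := by
          rw [hradabc, hn_def]; ring
  -- real-number part
  have hCpos : (0:ℤ) < C := by
    have h2m : (0:ℤ) < 2 ^ m := pow_pos (by norm_num) m
    have h1 : (0:ℤ) < C * 2 ^ m := by rw [hC]; exact pow_pos hc n
    rcases mul_pos_iff.mp h1 with ⟨h2, _⟩ | ⟨_, h2⟩
    · exact h2
    · exact absurd h2m (asymm h2)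
  have hcR : (0:ℝ) < (c:ℝ) := by exact_mod_cast hc
  have hnR : (2:ℝ) ≤ (n:ℝ) := by exact_mod_cast hn
  have h2n : (0:ℝ) < 2 * (n:ℝ) := by linarith
  have hlogC : Real.log ((C:ℤ):ℝ) = (n:ℝ) * Real.log (c:ℝ) - (m:ℝ) * Real.log 2 := by
    have hCR : ((C:ℤ):ℝ) * 2 ^ m = (c:ℝ) ^ n := by exact_mod_cast hC
    have hCne : ((C:ℤ):ℝ) ≠ 0 := by
      have : (0:ℝ) < ((C:ℤ):ℝ) := by exact_mod_cast hCpos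
      exact this.ne'
    have h1 : Real.log (((C:ℤ):ℝ) * 2 ^ m) = Real.log ((C:ℤ):ℝ) + (m:ℝ) * Real.log 2 := by
      rw [Real.log_mul hCne (by positivity), Real.log_pow]
    rw [hCR, Real.log_pow] at h1
    linarith
  have e2c : ((c' : ℕ) : ℝ) = (c : ℝ) := by
    have : (c' : ℤ) = c := Int.natAbs_of_nonneg hc.le
    exact_mod_cast this
  have keyR : ((rad (A * B * C).natAbs : ℕ) : ℝ) ≤
      2 * (n:ℝ) * ((rad (a * b * c).natAbs : ℕ) : ℝ) * (c:ℝ) ^ (2 * j + 1) := by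
    have h1 := (Nat.cast_le (α := ℝ)).mpr key
    push_cast at h1
    rw [e2c] at h1
    have e3 : (c:ℝ) * ((c:ℝ) ^ 2) ^ j = (c:ℝ) ^ (2 * j + 1) := by
      rw [← pow_mul]; exact (pow_succ' _ _).symm
    calc ((rad (A * B * C).natAbs : ℕ) : ℝ)
        ≤ 2 * (n:ℝ) * ((rad (a * b * c).natAbs : ℕ) : ℝ) * ((c:ℝ) * ((c:ℝ) ^ 2) ^ j) := h1
      _ = _ := by rw [e3]
  have hradabc_pos : (0:ℝ) < ((rad (a * b * c).natAbs : ℕ) : ℝ) := by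
    exact_mod_cast rad_pos _
  have hradN_pos : (0:ℝ) < ((rad (A * B * C).natAbs : ℕ) : ℝ) := by
    exact_mod_cast rad_pos _
  have hRN : Real.log ((rad (A * B * C).natAbs : ℕ) : ℝ) ≤
      Real.log (2 * (n:ℝ)) + Real.log ((rad (a * b * c).natAbs : ℕ) : ℝ) +
        (2 * (j:ℝ) + 1) * Real.log (c:ℝ) := by
    calc Real.log ((rad (A * B * C).natAbs : ℕ) : ℝ)
        ≤ Real.log (2 * (n:ℝ) * ((rad (a * b * c).natAbs : ℕ) : ℝ) * (c:ℝ) ^ (2 * j + 1)) :=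
          Real.log_le_log hradN_pos keyR
      _ = Real.log (2 * (n:ℝ)) + Real.log ((rad (a * b * c).natAbs : ℕ) : ℝ) +
            (2 * (j:ℝ) + 1) * Real.log (c:ℝ) := by
          rw [Real.log_mul (by positivity) (by positivity),
            Real.log_mul h2n.ne' hradabc_pos.ne', Real.log_pow]
          push_cast
          ring
  unfold fABC
  rw [ge_iff_le]
  set L := Real.log (c:ℝ) with hL_def
  set Rr := Real.log ((rad (a * b * c).natAbs : ℕ) : ℝ) with hRr_def
  set RN := Real.log ((rad (A * B * C).natAbs : ℕ) : ℝ) with hRN_def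
  have h1ε : (0:ℝ) < 1 + ε := by linarith
  have h1n : ε ≤ (n:ℝ) * ε := by nlinarith
  have hD : (0:ℝ) < (n:ℝ) + (n:ℝ) * ε - ε := by linarith
  have hK : 0 ≤ (n:ℝ) * (1 + ε) / ((n:ℝ) + (n:ℝ) * ε - ε) := by positivity
  have hinv : (1 + ε)⁻¹ * (L - (1 + ε) * Rr) = (1 + ε)⁻¹ * L - Rr := by
    field_simp
  have hinner : RN + (1 + ε)⁻¹ * (L - (1 + ε) * Rr) - Real.log (2 * (n:ℝ)) ≤
      (2 * (j:ℝ) + 1) * L + (1 + ε)⁻¹ * L := by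
    rw [hinv]; linarith [hRN]
  have hnj : (n:ℝ) = 2 * (j:ℝ) + 2 := by
    simp only [hn_def]; push_cast; ring
  have hmain : ((n:ℝ) * (1 + ε) / ((n:ℝ) + (n:ℝ) * ε - ε)) *
      ((2 * (j:ℝ) + 1) * L + (1 + ε)⁻¹ * L) = (n:ℝ) * L := by
    rw [hnj]
    have hD' : (0:ℝ) < (2 * (j:ℝ) + 2) + (2 * (j:ℝ) + 2) * ε - ε := by rw [← hnj]; exact hD
    rw [div_mul_eq_mul_div, div_eq_iff hD'.ne']
    field_simp
    ring
  have hlog2 : (0:ℝ) ≤ Real.log 2 := Real.log_nonneg (by norm_num)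
  have hmR : (m:ℝ) ≤ (n:ℝ) := by exact_mod_cast hmn
  calc ((n:ℝ) * (1 + ε) / ((n:ℝ) + (n:ℝ) * ε - ε)) *
        (RN + (1 + ε)⁻¹ * (L - (1 + ε) * Rr) - Real.log (2 * (n:ℝ))) - (n:ℝ) * Real.log 2
      ≤ ((n:ℝ) * (1 + ε) / ((n:ℝ) + (n:ℝ) * ε - ε)) *
          ((2 * (j:ℝ) + 1) * L + (1 + ε)⁻¹ * L) - (n:ℝ) * Real.log 2 := by
        have := mul_le_mul_of_nonneg_left hinner hK
        linarith
    _ = (n:ℝ) * L - (n:ℝ) * Real.log 2 := by rw [hmain]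
    _ ≤ (n:ℝ) * L - (m:ℝ) * Real.log 2 := by nlinarith
    _ = Real.log ((C:ℤ):ℝ) := hlogC.symm
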